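/- arXiv:1109.1986 — 2 statements merged into one kernel-verified Lean document; each statement's English description precedes it below -/
import Mathlib

section
/- Let μ be a probability measure on the unit circle S¹ with arclength distance d, fix p₀ ∈ S¹. The one-sided left derivative of θ ↦ F_μ(e_{p₀}(θ)) exists at every θ ∈ [−π,π) (taking the left limit from θ = π for the point θ = −π), and equals θ − 2π μ_{p₀}([−π, −π+θ)) − m(μ_{p₀}) if 0 ≤ θ < π, and θ + 2π μ_{p₀}([π+θ, π)) − m(μ_{p₀}) if −π ≤ θ < 0; in particular this extended derivative is left continuous on [−π,π). -/
open MeasureTheory Real Set Filter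

noncomputable section

/-- The unit circle `S¹` in `ℝ² ≃ ℂ`. -/
abbrev S1 := {x : ℂ // ‖x‖ = 1}

/-- The arclength distance on `S¹`. -/
def dS1 (x p : S1) : ℝ := 2 * Real.arcsin (‖(x : ℂ) - (p : ℂ)‖ / 2)

/-- The Fréchet functional of a measure `μ` on `S¹`. -/
def frechet (μ : Measure S1) (p : S1) : ℝ := (1/2) * ∫ x, (dS1 x p)^2 ∂μ

/-- The normal coordinate chart centered at `p`: `θ ↦ R_θ p`. -/
def chart (p : S1) (θ : ℝ) : S1 :=
  ⟨Complex.exp (θ * Complex.I) * (p : ℂ), by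
    rw [norm_mul, Complex.norm_exp_ofReal_mul_I, p.2, mul_one]⟩

/-- The inverse chart, with values in `[-π, π)`. -/
def invChart (p₀ : S1) (p : S1) : ℝ :=
  if Complex.arg ((p : ℂ) / (p₀ : ℂ)) = π then -π else Complex.arg ((p : ℂ) / (p₀ : ℂ))

/-- The image measure `μ_{p₀}` of `μ` in the normal chart centered at `p₀`. -/
def chartMeasure (μ : Measure S1) (p₀ : S1) : Measure ℝ := Measure.map (invChart p₀) μ

/-- `m(μ_{p₀})`, the Euclidean mean of the image measure in the chart centered at `p₀`. -/
def mMean (μ : Measure S1) (p₀ : S1) : ℝ := ∫ t, t ∂(chartMeasure μ p₀)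

/-- The antipodal point (cut locus) of `p`. -/
def antipode (p : S1) : S1 := ⟨-(p : ℂ), by rw [norm_neg]; exact p.2⟩

/-- The (left-continuous extension of the) derivative of `θ ↦ F_μ(e_{p₀}(θ))`. -/
def frechetExtDeriv (μ : Measure S1) (p₀ : S1) (θ : ℝ) : ℝ :=
  if 0 ≤ θ then θ - 2*π*(chartMeasure μ p₀ (Ico (-π) (-π+θ))).toReal - mMean μ p₀
  else θ + 2*π*(chartMeasure μ p₀ (Ico (π+θ) π)).toReal - mMean μ p₀

def basePt : S1 := ⟨1, by norm_num⟩

/-- The (unnormalized) arclength measure on `S¹`, of total mass `2π`. -/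
def arcMeasure : Measure S1 := Measure.map (chart basePt) (volume.restrict (Ico (-π) π))

/-- Property `P(p, α, φ)` for a density `f` on `S¹`. -/
def propP (f : S1 → ℝ) (p : S1) (α φ : ℝ) : Prop :=
  ∀ θ ∈ Ico (-π) π, φ ≤ |θ| → f (chart p θ) ≤ (1 - α)/(2*π)

/-! ### Auxiliary lemmas -/

/-- `wrap s` is the representative of `s` modulo `2π` lying in `[-π, π)`. -/
def wrap (s : ℝ) : ℝ := toIcoMod Real.two_pi_pos (-π) s

lemma wrap_mem (s : ℝ) : wrap s ∈ Ico (-π) π := by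
  have h := toIcoMod_mem_Ico Real.two_pi_pos (-π) s
  rwa [show -π + 2*π = π by ring] at h

lemma abs_wrap_le (s : ℝ) : |wrap s| ≤ π := by
  have h := wrap_mem s
  rw [abs_le]
  exact ⟨h.1, le_of_lt h.2⟩

lemma wrap_eq_iff {s c : ℝ} : wrap s = c ↔ (c ∈ Ico (-π) π ∧ ∃ z : ℤ, s = c + z * (2*π)) := by
  rw [wrap, toIcoMod_eq_iff, show -π + 2*π = π by ring]
  simp [zsmul_eq_mul]

lemma wrap_add_two_pi (s : ℝ) : wrap (s + 2*π) = wrap s :=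
  toIcoMod_add_right Real.two_pi_pos (-π) s

lemma measurable_wrap : Measurable wrap := by
  have : wrap = fun s => s - (⌊(s - (-π)) / (2*π)⌋ : ℝ) * (2*π) := by
    funext s
    rw [wrap, toIcoMod, toIcoDiv_eq_floor, zsmul_eq_mul]
  rw [this]
  exact measurable_id.sub (((Measurable.sub measurable_id measurable_const).div_const _).floor.comp measurable_id |> (fun h => ((measurable_from_top (f := (Int.cast : ℤ → ℝ))).comp h).mul_const _))

lemma sq_toIocMod (s : ℝ) :
    (toIocMod Real.two_pi_pos (-π) s)^2 = (wrap s)^2 := by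
  by_cases h : toIcoMod Real.two_pi_pos (-π) s = toIocMod Real.two_pi_pos (-π) s
  · rw [wrap, h]
  · have h3 : toIcoMod Real.two_pi_pos (-π) s + 2*π = toIocMod Real.two_pi_pos (-π) s :=
      (AddCommGroup.modEq_iff_toIcoMod_add_period_eq_toIocMod Real.two_pi_pos).mp
        ((AddCommGroup.modEq_iff_toIcoMod_ne_toIocMod Real.two_pi_pos).mpr h)
    have h4 := toIcoMod_mem_Ico Real.two_pi_pos (-π) s
    have h5 := toIocMod_mem_Ioc Real.two_pi_pos (-π) s
    have h6 : toIcoMod Real.two_pi_pos (-π) s = -π := by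
      have := h4.1
      have := h5.2
      linarith
    have h7 : toIocMod Real.two_pi_pos (-π) s = π := by rw [← h3, h6]; ring
    simp only [wrap]
    rw [h6, h7]
    ring

/-- The arclength distance is the absolute value of the argument of the quotient. -/
lemma norm_exp_mul_I_sub_one (a : ℝ) :
    ‖Complex.exp (a * Complex.I) - 1‖ = 2 * |Real.sin (a/2)| := by
  have key : Complex.exp (a * Complex.I) - 1
      = Complex.exp ((a/2 : ℝ) * Complex.I) * (2 * Real.sin (a/2) * Complex.I) := by
    have h1 : Complex.exp ((a:ℂ) * Complex.I)
        = Complex.exp ((a/2 : ℝ) * Complex.I) * Complex.exp ((a/2 : ℝ) * Complex.I) := by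
      rw [← Complex.exp_add]
      congr 1
      push_cast
      ring
    have h2 : (1 : ℂ) = Complex.exp ((a/2 : ℝ) * Complex.I) * Complex.exp (-((a/2 : ℝ) * Complex.I)) := by
      rw [← Complex.exp_add]
      simp
    have hdiff : Complex.exp ((a/2 : ℝ) * Complex.I) - Complex.exp (-((a/2 : ℝ) * Complex.I))
        = 2 * (Real.sin (a/2) : ℂ) * Complex.I := by
      rw [show -(((a/2 : ℝ):ℂ) * Complex.I) = (-((a/2 : ℝ):ℂ)) * Complex.I by ring]
      rw [Complex.exp_mul_I, Complex.exp_mul_I, Complex.cos_neg, Complex.sin_neg,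
        Complex.ofReal_sin]
      ring
    linear_combination h1 - h2 + Complex.exp ((a/2 : ℝ) * Complex.I) * hdiff
  rw [key, norm_mul, Complex.norm_exp_ofReal_mul_I, one_mul]
  rw [norm_mul, norm_mul, Complex.norm_I, mul_one, Complex.norm_real, Real.norm_eq_abs]
  norm_num

lemma dS1_eq (x p : S1) : dS1 x p = |Complex.arg ((x : ℂ) / (p : ℂ))| := by
  have hx : ‖(x:ℂ)‖ = 1 := x.2
  have hp : ‖(p:ℂ)‖ = 1 := p.2
  have hp0 : (p:ℂ) ≠ 0 := by intro h; rw [h] at hp; simp at hp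
  set z : ℂ := (x:ℂ)/(p:ℂ) with hz
  have hzn : ‖z‖ = 1 := by rw [hz, norm_div, hx, hp, div_one]
  set a : ℝ := z.arg with ha
  have haIoc : a ∈ Ioc (-π) π := ⟨Complex.neg_pi_lt_arg z, Complex.arg_le_pi z⟩
  have hze : Complex.exp (a * Complex.I) = z := by
    have := Complex.norm_mul_exp_arg_mul_I z
    rwa [hzn, Complex.ofReal_one, one_mul] at this
  have hnorm : ‖(x:ℂ) - (p:ℂ)‖ = ‖z - 1‖ := by
    have : (x:ℂ) - (p:ℂ) = (z - 1) * (p:ℂ) := by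
      rw [hz]; field_simp
    rw [this, norm_mul, hp, mul_one]
  have h2 : ‖(x:ℂ) - (p:ℂ)‖ = 2 * |Real.sin (a/2)| := by
    rw [hnorm, ← hze, norm_exp_mul_I_sub_one]
  rw [dS1, h2]
  have hπ := Real.pi_pos
  rcases le_or_gt 0 a with h0 | h0
  · have hsin : 0 ≤ Real.sin (a/2) :=
      Real.sin_nonneg_of_nonneg_of_le_pi (by linarith) (by linarith [haIoc.2])
    rw [abs_of_nonneg hsin, show 2 * Real.sin (a/2) / 2 = Real.sin (a/2) by ring,
      Real.arcsin_sin (by linarith [haIoc.1, haIoc.2]) (by linarith [haIoc.1, haIoc.2]), abs_of_nonneg h0]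
    ring
  · have hsin : Real.sin (a/2) ≤ 0 := by
      have : Real.sin (-(a/2)) ≥ 0 :=
        Real.sin_nonneg_of_nonneg_of_le_pi (by linarith) (by linarith [haIoc.1])
      rw [Real.sin_neg] at this
      linarith
    rw [abs_of_nonpos hsin, show 2 * -Real.sin (a/2) / 2 = Real.sin (-(a/2)) by rw [Real.sin_neg]; ring,
      Real.arcsin_sin (by linarith [haIoc.1, haIoc.2]) (by linarith [haIoc.1, haIoc.2]), abs_of_neg h0]
    ring

lemma exp_invChart (p₀ x : S1) :
    Complex.exp ((invChart p₀ x : ℝ) * Complex.I) = (x : ℂ) / (p₀ : ℂ) := by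
  have hp : ‖(p₀:ℂ)‖ = 1 := p₀.2
  have hx : ‖(x:ℂ)‖ = 1 := x.2
  have hzn : ‖(x:ℂ)/(p₀:ℂ)‖ = 1 := by rw [norm_div, hx, hp, div_one]
  have hze : Complex.exp (Complex.arg ((x:ℂ)/(p₀:ℂ)) * Complex.I) = (x:ℂ)/(p₀:ℂ) := by
    have := Complex.norm_mul_exp_arg_mul_I ((x:ℂ)/(p₀:ℂ))
    rwa [hzn, Complex.ofReal_one, one_mul] at this
  rw [invChart]
  split_ifs with h
  · rw [← hze, h]
    rw [show ((-π : ℝ) : ℂ) * Complex.I = (π : ℝ) * Complex.I - 2 * π * Complex.I by push_cast; ring]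
    rw [Complex.exp_sub]
    have : Complex.exp (2 * π * Complex.I) = 1 := Complex.exp_two_pi_mul_I
    rw [this, div_one]
  · exact hze

lemma chart_invChart (p₀ x : S1) : chart p₀ (invChart p₀ x) = x := by
  have hp0 : (p₀:ℂ) ≠ 0 := by
    intro h
    have := p₀.2
    rw [h] at this; simp at this
  apply Subtype.ext
  show Complex.exp ((invChart p₀ x : ℝ) * Complex.I) * (p₀ : ℂ) = (x : ℂ)
  rw [exp_invChart]
  field_simp

lemma invChart_mem (p₀ x : S1) : invChart p₀ x ∈ Ico (-π) π := by
  rw [invChart]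
  split_ifs with h
  · exact ⟨le_refl _, by linarith [Real.pi_pos]⟩
  · exact ⟨(Complex.neg_pi_lt_arg _).le, lt_of_le_of_ne (Complex.arg_le_pi _) h⟩

lemma dS1_chart (p₀ x : S1) (t : ℝ) :
    dS1 x (chart p₀ t) = |toIocMod Real.two_pi_pos (-π) (invChart p₀ x - t)| := by
  have hp0 : (p₀:ℂ) ≠ 0 := by
    intro h
    have := p₀.2
    rw [h] at this; simp at this
  rw [dS1_eq]
  have hq : (x : ℂ) / ((chart p₀ t : S1) : ℂ)
      = Complex.exp (((invChart p₀ x - t : ℝ)) * Complex.I) := by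
    show (x : ℂ) / (Complex.exp (t * Complex.I) * (p₀ : ℂ)) = _
    rw [show ((invChart p₀ x - t : ℝ) : ℂ) * Complex.I
        = (invChart p₀ x : ℝ) * Complex.I - (t : ℝ) * Complex.I by push_cast; ring]
    rw [Complex.exp_sub, exp_invChart]
    rw [div_div, mul_comm]
  rw [hq, Complex.arg_exp_mul_I]

lemma measurable_invChart (p₀ : S1) : Measurable (invChart p₀) := by
  have hm : Measurable (fun p : S1 => Complex.arg ((p : ℂ) / (p₀ : ℂ))) :=
    Complex.measurable_arg.comp (measurable_subtype_coe.div_const _)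
  exact Measurable.ite (hm (measurableSet_singleton π)) measurable_const hm

/-- Key local formula: `wrap (s - t) = wrap (s - θ) + (θ - t)` for `t` slightly below `θ`. -/
lemma wrap_sub_eq (s θ : ℝ) :
    ∃ δ > 0, ∀ t ∈ Ioc (θ - δ) θ, wrap (s - t) = wrap (s - θ) + (θ - t) := by
  have hmem := wrap_mem (s - θ)
  refine ⟨π - wrap (s - θ), by linarith [hmem.2], fun t ht => ?_⟩
  obtain ⟨z, hz⟩ := (wrap_eq_iff (s := s - θ) (c := wrap (s - θ))).mp rfl |>.2
  refine wrap_eq_iff.mpr ⟨⟨by linarith [ht.2, hmem.1], by linarith [ht.1]⟩, z, by linarith⟩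

/-- `|wrap|` is 1-Lipschitz. -/
lemma abs_wrap_le_abs_sub (a : ℝ) (z : ℤ) : |wrap a| ≤ |a - z * (2*π)| := by
  obtain ⟨z₀, hz₀⟩ := (wrap_eq_iff (s := a) (c := wrap a)).mp rfl |>.2
  rcases eq_or_ne z z₀ with rfl | hne
  · rw [show a - z * (2*π) = wrap a by linarith]
  · have h1 : (1 : ℝ) ≤ |((z₀ - z : ℤ) : ℝ)| := by
      have := Int.one_le_abs (sub_ne_zero.mpr (Ne.symm hne))
      rw [← Int.cast_abs]
      exact_mod_cast this
    have h2 : a - z * (2*π) = wrap a + (z₀ - z : ℤ) * (2*π) := by push_cast; linarith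
    have h3 : |(z₀ - z : ℤ) * (2*π)| ≥ 2*π := by
      rw [abs_mul, abs_of_pos Real.two_pi_pos]
      nlinarith [Real.two_pi_pos, h1]
    have h4 := abs_wrap_le a
    calc |wrap a| ≤ π := h4
    _ ≤ |(z₀ - z : ℤ) * (2*π)| - |wrap a| := by
        have := Real.pi_pos
        linarith
    _ ≤ |wrap a + (z₀ - z : ℤ) * (2*π)| := by
        have h := abs_sub_abs_le_abs_sub (((z₀ - z : ℤ) : ℝ) * (2*π)) (-(wrap a))
        rw [abs_neg, sub_neg_eq_add] at h
        rw [add_comm]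
        linarith
    _ = |a - z * (2*π)| := by rw [h2]

lemma abs_wrap_lipschitz (a b : ℝ) : |wrap a| - |wrap b| ≤ |a - b| := by
  obtain ⟨z, hz⟩ := (wrap_eq_iff (s := b) (c := wrap b)).mp rfl |>.2
  have h1 := abs_wrap_le_abs_sub a z
  have h2 : a - z * (2*π) = (a - b) + wrap b := by linarith
  calc |wrap a| - |wrap b| ≤ |a - z * (2*π)| - |wrap b| := by linarith
  _ = |(a - b) + wrap b| - |wrap b| := by rw [h2]
  _ ≤ (|a - b| + |wrap b|) - |wrap b| := by linarith [abs_add_le (a - b) (wrap b)]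
  _ = |a - b| := by ring

lemma sq_wrap_lipschitz (a b : ℝ) : |(wrap a)^2 - (wrap b)^2| ≤ 2*π * |a - b| := by
  have h1 := abs_wrap_lipschitz a b
  have h2 := abs_wrap_lipschitz b a
  have h3 := abs_wrap_le a
  have h4 := abs_wrap_le b
  have h5 : |b - a| = |a - b| := abs_sub_comm b a
  have ha := abs_nonneg (wrap a)
  have hb := abs_nonneg (wrap b)
  have hab := abs_nonneg (a - b)
  rw [abs_le]
  constructor <;> nlinarith [sq_abs (wrap a), sq_abs (wrap b)]

/-- Pointwise one-sided derivative of `t ↦ wrap (s - t) ^ 2`. -/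
lemma hasDerivWithinAt_wrap_sq (s θ : ℝ) :
    HasDerivWithinAt (fun t => (wrap (s - t))^2) (-(2 * wrap (s - θ))) (Iio θ) θ := by
  obtain ⟨δ, hδ, hloc⟩ := wrap_sub_eq s θ
  set c := wrap (s - θ) with hc
  have hq : HasDerivAt (fun t : ℝ => (c + (θ - t))^2) (-(2 * c)) θ := by
    have h1 : HasDerivAt (fun t : ℝ => c + (θ - t)) (-1) θ := by
      simpa using ((hasDerivAt_id θ).const_sub θ).const_add c
    have h2 := h1.fun_pow 2
    refine h2.congr_deriv ?_
    norm_num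
  rw [← hasDerivWithinAt_inter (Ioi_mem_nhds (show θ - δ < θ by linarith))]
  refine (hq.hasDerivWithinAt).congr (fun y hy => ?_) (by simp [hc])
  rw [hloc y ⟨hy.2, hy.1.le⟩]

section main

variable (μ : Measure S1) [IsProbabilityMeasure μ] (p₀ : S1)

lemma chartMeasure_prob : IsProbabilityMeasure (chartMeasure μ p₀) :=
  Measure.isProbabilityMeasure_map (measurable_invChart p₀).aemeasurable

omit [IsProbabilityMeasure μ] in
lemma chartMeasure_ae : ∀ᵐ s ∂(chartMeasure μ p₀), s ∈ Ico (-π) π := by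
  have hset : MeasurableSet {s : ℝ | s ∈ Ico (-π) π} := measurableSet_Ico
  rw [chartMeasure, ae_map_iff (measurable_invChart p₀).aemeasurable hset]
  exact Eventually.of_forall fun x => invChart_mem p₀ x

omit [IsProbabilityMeasure μ] in
lemma frechet_chart_eq (t : ℝ) :
    frechet μ (chart p₀ t) = (1/2) * ∫ s, (wrap (s - t))^2 ∂(chartMeasure μ p₀) := by
  rw [frechet, chartMeasure]
  congr 1
  have hm : Measurable (fun s : ℝ => (wrap (s - t))^2) :=
    (measurable_wrap.comp (measurable_id.sub_const t)).pow_const 2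
  rw [integral_map (measurable_invChart p₀).aemeasurable hm.aestronglyMeasurable]
  refine integral_congr_ae (Eventually.of_forall fun x => ?_)
  show (dS1 x (chart p₀ t))^2 = (wrap (invChart p₀ x - t))^2
  rw [dS1_chart, sq_abs, sq_toIocMod]

lemma integrable_bdd {f : ℝ → ℝ} (hf : Measurable f) {C : ℝ}
    (h : ∀ᵐ s ∂(chartMeasure μ p₀), |f s| ≤ C) : Integrable f (chartMeasure μ p₀) := by
  have := chartMeasure_prob μ p₀
  exact Integrable.mono' (integrable_const C) hf.aestronglyMeasurable h

/-- The key one-sided derivative formula, valid at every `θ`. -/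
lemma key_deriv (θ : ℝ) :
    HasDerivWithinAt (fun t => frechet μ (chart p₀ t))
      (-∫ s, wrap (s - θ) ∂(chartMeasure μ p₀)) (Iio θ) θ := by
  have hprob := chartMeasure_prob μ p₀
  have hint : ∀ t : ℝ, Integrable (fun s => (wrap (s - t))^2) (chartMeasure μ p₀) := by
    intro t
    refine integrable_bdd μ p₀ ((measurable_wrap.comp (measurable_id.sub_const t)).pow_const 2)
      (C := π^2) (Eventually.of_forall fun s => ?_)
    rw [abs_of_nonneg (sq_nonneg _), ← sq_abs]
    exact pow_le_pow_left₀ (abs_nonneg _) (abs_wrap_le _) 2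
  have h2 : HasDerivWithinAt (fun t => ∫ s, (wrap (s - t))^2 ∂(chartMeasure μ p₀))
      (∫ s, -(2 * wrap (s - θ)) ∂(chartMeasure μ p₀)) (Iio θ) θ := by
    rw [hasDerivWithinAt_iff_tendsto_slope]
    have hIio : Iio θ \ {θ} = Iio θ := diff_singleton_eq_self (show θ ∉ Iio θ by simp)
    rw [hIio]
    have hF : Tendsto (fun t => ∫ s, ((wrap (s - t))^2 - (wrap (s - θ))^2) / (t - θ)
        ∂(chartMeasure μ p₀)) (nhdsWithin θ (Iio θ))
        (nhds (∫ s, -(2 * wrap (s - θ)) ∂(chartMeasure μ p₀))) := by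
      apply tendsto_integral_filter_of_dominated_convergence (bound := fun _ => 2*π)
      · filter_upwards [self_mem_nhdsWithin] with t ht
        exact (((measurable_wrap.comp (measurable_id.sub_const t)).pow_const 2).sub
          ((measurable_wrap.comp (measurable_id.sub_const θ)).pow_const 2)).div_const
          _ |>.aestronglyMeasurable
      · filter_upwards [self_mem_nhdsWithin] with t ht
        refine Eventually.of_forall fun s => ?_
        have htθ : t - θ ≠ 0 := sub_ne_zero.mpr (ne_of_lt ht)
        rw [Real.norm_eq_abs, abs_div]
        rw [div_le_iff₀ (abs_pos.mpr htθ)]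
        calc |(wrap (s - t))^2 - (wrap (s - θ))^2| ≤ 2*π * |(s - t) - (s - θ)| :=
              sq_wrap_lipschitz _ _
        _ = 2*π * |t - θ| := by rw [show (s - t) - (s - θ) = -(t - θ) by ring, abs_neg]
      · exact integrable_const _
      · refine Eventually.of_forall fun s => ?_
        have hd := hasDerivWithinAt_wrap_sq s θ
        rw [hasDerivWithinAt_iff_tendsto_slope, hIio] at hd
        refine hd.congr fun t => ?_
        rw [slope_def_field]
    refine hF.congr' ?_
    filter_upwards [self_mem_nhdsWithin] with t ht
    have htθ : t - θ ≠ 0 := sub_ne_zero.mpr (ne_of_lt ht)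
    rw [slope_def_field]
    rw [← integral_sub (hint t) (hint θ), ← integral_div]
  have hval : (-∫ s, wrap (s - θ) ∂(chartMeasure μ p₀))
      = (1/2) * ∫ s, -(2 * wrap (s - θ)) ∂(chartMeasure μ p₀) := by
    have : (fun s => -(2 * wrap (s - θ))) = fun s => (-2 : ℝ) * wrap (s - θ) := by
      funext s; ring
    rw [this, integral_const_mul]
    ring
  have h3 := h2.const_mul (1/2 : ℝ)
  simp only [← frechet_chart_eq μ p₀] at h3
  rwa [hval]

/-- Identification of the derivative with `extDeriv` on `[-π, π)`. -/
lemma extDeriv_eq {θ : ℝ} (hθ : θ ∈ Ico (-π) π) :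
    frechetExtDeriv μ p₀ θ = -∫ s, wrap (s - θ) ∂(chartMeasure μ p₀) := by
  have hprob := chartMeasure_prob μ p₀
  have hae := chartMeasure_ae μ p₀
  have hπ := Real.pi_pos
  have hmean_int : Integrable (fun s : ℝ => s) (chartMeasure μ p₀) := by
    refine integrable_bdd μ p₀ measurable_id (C := π) ?_
    filter_upwards [hae] with s hs
    rw [abs_le]
    exact ⟨hs.1, hs.2.le⟩
  by_cases h0 : 0 ≤ θ
  · have hcongr : ∀ᵐ s ∂(chartMeasure μ p₀),
        wrap (s - θ) = s - θ + Set.indicator (Ico (-π) (-π+θ)) (fun _ => 2*π) s := by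
      filter_upwards [hae] with s hs
      by_cases hs2 : s < -π + θ
      · rw [Set.indicator_of_mem (show s ∈ Ico (-π) (-π+θ) from ⟨hs.1, hs2⟩) (fun _ => 2*π)]
        show wrap (s - θ) = s - θ + 2*π
        exact wrap_eq_iff.mpr ⟨⟨by linarith [hθ.2, hs.1], by linarith⟩, -1, by push_cast; ring⟩
      · rw [Set.indicator_of_notMem (fun hmem => hs2 hmem.2), add_zero]
        rw [not_lt] at hs2
        exact wrap_eq_iff.mpr ⟨⟨by linarith, by linarith [hs.2]⟩, 0, by push_cast; ring⟩
    rw [integral_congr_ae hcongr]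
    have hind : Integrable (fun s : ℝ => Set.indicator (Ico (-π) (-π+θ)) (fun _ => 2*π) s)
        (chartMeasure μ p₀) := (integrable_const (2*π)).indicator measurableSet_Ico
    have h1 : Integrable (fun s : ℝ => s - θ) (chartMeasure μ p₀) :=
      hmean_int.sub (integrable_const θ)
    rw [integral_add h1 hind]
    rw [integral_sub hmean_int (integrable_const θ), integral_const]
    rw [integral_indicator_const _ measurableSet_Ico]
    rw [frechetExtDeriv, if_pos h0]
    simp only [measureReal_def, measure_univ, ENNReal.toReal_one, smul_eq_mul, one_smul, mMean]
    ring
  · rw [not_le] at h0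
    have hcongr : ∀ᵐ s ∂(chartMeasure μ p₀),
        wrap (s - θ) = s - θ - Set.indicator (Ico (π+θ) π) (fun _ => 2*π) s := by
      filter_upwards [hae] with s hs
      by_cases hs2 : π + θ ≤ s
      · rw [Set.indicator_of_mem (show s ∈ Ico (π+θ) π from ⟨hs2, hs.2⟩) (fun _ => 2*π)]
        show wrap (s - θ) = s - θ - 2*π
        exact wrap_eq_iff.mpr ⟨⟨by linarith, by linarith [hs.2, hθ.1]⟩, 1, by push_cast; ring⟩
      · rw [Set.indicator_of_notMem (fun hmem => hs2 hmem.1), sub_zero]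
        rw [not_le] at hs2
        exact wrap_eq_iff.mpr ⟨⟨by linarith [hs.1], by linarith⟩, 0, by push_cast; ring⟩
    rw [integral_congr_ae hcongr]
    have hind : Integrable (fun s : ℝ => Set.indicator (Ico (π+θ) π) (fun _ => 2*π) s)
        (chartMeasure μ p₀) := (integrable_const (2*π)).indicator measurableSet_Ico
    have h1 : Integrable (fun s : ℝ => s - θ) (chartMeasure μ p₀) :=
      hmean_int.sub (integrable_const θ)
    rw [integral_sub h1 hind]
    rw [integral_sub hmean_int (integrable_const θ), integral_const]
    rw [integral_indicator_const _ measurableSet_Ico]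
    rw [frechetExtDeriv, if_neg (not_le.mpr h0)]
    simp only [measureReal_def, measure_univ, ENNReal.toReal_one, smul_eq_mul, one_smul, mMean]
    ring

/-- Left continuity of `θ ↦ -∫ wrap (s - θ)`. -/
lemma tendsto_int_wrap (θ : ℝ) :
    Tendsto (fun t => -∫ s, wrap (s - t) ∂(chartMeasure μ p₀)) (nhdsWithin θ (Iio θ))
      (nhds (-∫ s, wrap (s - θ) ∂(chartMeasure μ p₀))) := by
  have hprob := chartMeasure_prob μ p₀
  apply Tendsto.neg
  apply tendsto_integral_filter_of_dominated_convergence (bound := fun _ => π)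
  · filter_upwards [self_mem_nhdsWithin] with t ht
    exact (measurable_wrap.comp (measurable_id.sub_const t)).aestronglyMeasurable
  · filter_upwards [self_mem_nhdsWithin] with t ht
    refine Eventually.of_forall fun s => ?_
    rw [Real.norm_eq_abs]
    exact abs_wrap_le _
  · exact integrable_const π
  · refine Eventually.of_forall fun s => ?_
    obtain ⟨δ, hδ, hloc⟩ := wrap_sub_eq s θ
    have hcont : Tendsto (fun t : ℝ => wrap (s - θ) + (θ - t)) (nhdsWithin θ (Iio θ))
        (nhds (wrap (s - θ))) := by
      have h1 : Tendsto (fun t : ℝ => wrap (s - θ) + (θ - t)) (nhds θ)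
          (nhds (wrap (s - θ) + (θ - θ))) :=
        (continuous_const.add (continuous_const.sub continuous_id)).tendsto θ
      rw [sub_self, add_zero] at h1
      exact h1.mono_left nhdsWithin_le_nhds
    refine Tendsto.congr' ?_ hcont
    filter_upwards [Ioo_mem_nhdsLT_of_mem
      (show θ ∈ Ioc (θ - δ) θ from ⟨by linarith, le_refl θ⟩)] with t ht
    exact (hloc t ⟨ht.1, ht.2.le⟩).symm

end main

/-- the left derivative of `θ ↦ F_μ(e_{p₀}(θ))` exists at every
`θ ∈ [-π, π)` and is given by the explicit formula `extDeriv` (at `θ = -π`, since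
`θ ↦ chart p₀ θ` is `2π`-periodic, the left derivative within `Iio (-π)` is exactly
the left limit from `θ = π`); moreover this extended derivative is left continuous
on `[-π, π)` (again with the limit from `π` at the point `-π`). -/
theorem frechet_left_deriv (μ : Measure S1) [IsProbabilityMeasure μ] (p₀ : S1) :
    (∀ θ ∈ Ico (-π) π,
      HasDerivWithinAt (fun t => frechet μ (chart p₀ t)) (frechetExtDeriv μ p₀ θ) (Iio θ) θ) ∧
    (∀ θ ∈ Ioo (-π) π,
      Tendsto (frechetExtDeriv μ p₀) (nhdsWithin θ (Iio θ)) (nhds (frechetExtDeriv μ p₀ θ))) ∧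
    Tendsto (frechetExtDeriv μ p₀) (nhdsWithin π (Iio π)) (nhds (frechetExtDeriv μ p₀ (-π))) := by
  refine ⟨fun θ hθ => ?_, fun θ hθ => ?_, ?_⟩
  · rw [extDeriv_eq μ p₀ hθ]
    exact key_deriv μ p₀ θ
  · have h1 : Tendsto (fun t => -∫ s, wrap (s - t) ∂(chartMeasure μ p₀)) (nhdsWithin θ (Iio θ))
        (nhds (frechetExtDeriv μ p₀ θ)) := by
      rw [extDeriv_eq μ p₀ ⟨le_of_lt hθ.1, hθ.2⟩]
      exact tendsto_int_wrap μ p₀ θ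
    refine h1.congr' ?_
    filter_upwards [Ioo_mem_nhdsLT_of_mem (show θ ∈ Ioc (-π) θ from ⟨hθ.1, le_refl θ⟩)] with t ht
    exact (extDeriv_eq μ p₀ ⟨le_of_lt ht.1, lt_trans ht.2 hθ.2⟩).symm
  · have hval : frechetExtDeriv μ p₀ (-π) = -∫ s, wrap (s - π) ∂(chartMeasure μ p₀) := by
      rw [extDeriv_eq μ p₀ ⟨le_refl _, by linarith [Real.pi_pos]⟩]
      congr 1
      refine integral_congr_ae (Eventually.of_forall fun s => ?_)
      show wrap (s - -π) = wrap (s - π)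
      rw [show s - -π = (s - π) + 2*π by ring, wrap_add_two_pi]
    have h1 : Tendsto (fun t => -∫ s, wrap (s - t) ∂(chartMeasure μ p₀)) (nhdsWithin π (Iio π))
        (nhds (frechetExtDeriv μ p₀ (-π))) := by
      rw [hval]; exact tendsto_int_wrap μ p₀ π
    refine h1.congr' ?_
    filter_upwards [Ioo_mem_nhdsLT_of_mem
      (show π ∈ Ioc (-π) π from ⟨by linarith [Real.pi_pos], le_refl π⟩)] with t ht
    exact (extDeriv_eq μ p₀ ⟨le_of_lt ht.1, ht.2⟩).symm
end
end

section
/- Let f : S¹ → ℝ⁺ be a probability density on the unit circle, let p₁, p₂ ∈ S¹, α ∈ (0,1] and φ ∈ (0, π/2). If d(p₁,p₂) < π − φ and f satisfies property P(p₁,α,φ), then f satisfies property P(p₂, α, φ + d(p₁,p₂)). -/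
open MeasureTheory Real Set Filter

noncomputable section

/-- The (left-continuous extension of the) derivative of `θ ↦ F_μ(e_{p₀}(θ))`. -/
def extDerivS1 (μ : Measure S1) (p₀ : S1) (θ : ℝ) : ℝ :=
  if 0 ≤ θ then θ - 2*π*(chartMeasure μ p₀ (Ico (-π) (-π+θ))).toReal - mMean μ p₀
  else θ + 2*π*(chartMeasure μ p₀ (Ico (π+θ) π)).toReal - mMean μ p₀

lemma chart_chart (p : S1) (a b : ℝ) : chart (chart p a) b = chart p (b + a) := by
  apply Subtype.ext
  show Complex.exp _ * (Complex.exp _ * _) = Complex.exp _ * _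
  rw [← mul_assoc, ← Complex.exp_add]
  push_cast
  ring_nf

lemma chart_add_two_pi (p : S1) (x : ℝ) : chart p (x + 2*π) = chart p x := by
  apply Subtype.ext
  show Complex.exp _ * _ = Complex.exp _ * _
  push_cast
  rw [add_mul, Complex.exp_add, Complex.exp_two_pi_mul_I, mul_one]

lemma chart_sub_two_pi (p : S1) (x : ℝ) : chart p (x - 2*π) = chart p x := by
  have := chart_add_two_pi p (x - 2*π)
  simpa using this.symm

lemma chart_arg (p₁ p₂ : S1) : chart p₁ (Complex.arg ((p₂:ℂ)/(p₁:ℂ))) = p₂ := by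
  apply Subtype.ext
  show Complex.exp _ * _ = _
  have h1 : (p₁:ℂ) ≠ 0 := by intro hz; have := p₁.2; rw [hz] at this; norm_num at this
  have habs : ‖(p₂:ℂ)/(p₁:ℂ)‖ = 1 := by
    rw [norm_div, p₁.2, p₂.2]; norm_num
  have := Complex.norm_mul_exp_arg_mul_I ((p₂:ℂ)/(p₁:ℂ))
  rw [habs] at this
  push_cast at this
  rw [one_mul] at this
  rw [this]
  field_simp

lemma norm_one_sub_exp (δ : ℝ) : ‖1 - Complex.exp (δ * Complex.I)‖ = 2 * |Real.sin (δ/2)| := by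
  have hre : (1 - Complex.exp (δ * Complex.I)).re = 1 - Real.cos δ := by
    simp [Complex.exp_ofReal_mul_I_re]
  have him : (1 - Complex.exp (δ * Complex.I)).im = -Real.sin δ := by
    simp [Complex.exp_ofReal_mul_I_im]
  rw [Complex.norm_def, Complex.normSq_apply, hre, him]
  have key : (1 - Real.cos δ) * (1 - Real.cos δ) + (-Real.sin δ) * (-Real.sin δ)
      = (2 * |Real.sin (δ/2)|)^2 := by
    have h1 := Real.cos_two_mul (δ/2)
    rw [show 2*(δ/2) = δ by ring] at h1
    have h2 := Real.sin_sq_add_cos_sq (δ/2)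
    have h2' := Real.sin_sq_add_cos_sq δ
    have h3 : |Real.sin (δ/2)|^2 = Real.sin (δ/2)^2 := sq_abs _
    nlinarith
  rw [key, Real.sqrt_sq (by positivity)]

lemma dS1_eq_abs_arg (p₁ p₂ : S1) :
    dS1 p₁ p₂ = |Complex.arg ((p₂:ℂ)/(p₁:ℂ))| := by
  have hp2 := chart_arg p₁ p₂
  set δ := Complex.arg ((p₂:ℂ)/(p₁:ℂ)) with hδ
  have hrange := Complex.arg_mem_Ioc ((p₂:ℂ)/(p₁:ℂ))
  have hle : |δ| ≤ π := abs_le.mpr ⟨hrange.1.le, hrange.2⟩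
  have hnorm : ‖(p₁:ℂ) - (p₂:ℂ)‖ = 2 * |Real.sin (δ/2)| := by
    rw [← hp2]
    show ‖(p₁:ℂ) - Complex.exp (δ * Complex.I) * (p₁:ℂ)‖ = _
    rw [show (p₁:ℂ) - Complex.exp (δ * Complex.I) * (p₁:ℂ)
        = (1 - Complex.exp (δ * Complex.I)) * (p₁:ℂ) by ring]
    rw [norm_mul, p₁.2, mul_one, norm_one_sub_exp]
  have habs : |Real.sin (δ/2)| = Real.sin (|δ|/2) := by
    rcases abs_cases δ with ⟨h1, h2⟩ | ⟨h1, h2⟩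
    · rw [h1, abs_of_nonneg (Real.sin_nonneg_of_nonneg_of_le_pi (by linarith) (by linarith))]
    · rw [h1, abs_of_nonpos, ← Real.sin_neg]; ring_nf
      exact Real.sin_nonpos_of_nonpos_of_neg_pi_le (by linarith) (by linarith)
  rw [dS1, hnorm]
  rw [show 2 * |Real.sin (δ/2)| / 2 = |Real.sin (δ/2)| by ring, habs,
    Real.arcsin_sin (by linarith [abs_nonneg δ, pi_pos.le]) (by linarith)]
  ring


/-- Lemma `lemme.properties` (2): transport of property `P` between base
points: if `d(p₁,p₂) < π - φ` then `P(p₁,α,φ)` implies `P(p₂, α, φ + d(p₁,p₂))`. -/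
theorem propP_transport (f : S1 → ℝ) (hf : ∀ x, 0 ≤ f x)
    (hprob : ∫ x, f x ∂arcMeasure = 1) (p₁ p₂ : S1) (α φ : ℝ)
    (hα₀ : 0 < α) (hα : α ≤ 1) (hφ₀ : 0 < φ) (hφ : φ < π/2)
    (hd : dS1 p₁ p₂ < π - φ) (h : propP f p₁ α φ) :
    propP f p₂ α (φ + dS1 p₁ p₂) := by
  intro θ hθ habs
  obtain ⟨hθ1, hθ2⟩ := hθ
  have hp2 := chart_arg p₁ p₂
  set δ := Complex.arg ((p₂:ℂ)/(p₁:ℂ)) with hδdef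
  have hdval : dS1 p₁ p₂ = |δ| := dS1_eq_abs_arg p₁ p₂
  rw [hdval] at hd habs
  have hδ1 : -|δ| ≤ δ := neg_abs_le δ
  have hδ2 : δ ≤ |δ| := le_abs_self δ
  have hδ0 : 0 ≤ |δ| := abs_nonneg δ
  have hkey : chart p₂ θ = chart p₁ (θ + δ) := by rw [← hp2, chart_chart]
  rcases abs_cases θ with ⟨ha1, ha2⟩ | ⟨ha1, ha2⟩ <;> rw [ha1] at habs
  · -- θ ≥ 0
    rcases lt_or_ge (θ + δ) π with hc | hc
    · -- θ + δ ∈ [-π, π)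
      have hb1 : -π ≤ θ + δ := by linarith
      have := h (θ + δ) ⟨hb1, hc⟩ (by
        rcases abs_cases (θ + δ) with ⟨hb, _⟩ | ⟨hb, _⟩ <;> rw [hb] <;> linarith)
      rwa [hkey]
    · -- θ + δ ≥ π : shift down
      have hb1 : -π ≤ θ + δ - 2*π := by linarith
      have hb2 : θ + δ - 2*π < π := by linarith [pi_pos]
      have hb3 : θ + δ - 2*π < -φ := by linarith
      have := h (θ + δ - 2*π) ⟨hb1, hb2⟩ (by rw [abs_of_nonpos (by linarith [hφ₀])]; linarith)
      rwa [hkey, ← chart_sub_two_pi]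
  · -- θ < 0 (θ ≤ 0)
    rcases le_or_gt (-π) (θ + δ) with hc | hc
    · have hb2 : θ + δ < π := by linarith [pi_pos]
      have := h (θ + δ) ⟨hc, hb2⟩ (by
        rcases abs_cases (θ + δ) with ⟨hb, _⟩ | ⟨hb, _⟩ <;> rw [hb] <;> linarith)
      rwa [hkey]
    · -- θ + δ < -π : shift up
      have hb1 : φ < θ + δ + 2*π := by linarith
      have hb2 : θ + δ + 2*π < π := by linarith
      have := h (θ + δ + 2*π) ⟨by linarith [hφ₀], hb2⟩
        (by rw [abs_of_nonneg (by linarith [hφ₀])]; linarith)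
      rwa [hkey, ← chart_add_two_pi]
end
end
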